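/- The congruence subgroup Γ₁(2) = { [[a,b],[c,d]] ∈ SL₂(ℤ) : c ≡ 0 mod 2 and a ≡ d ≡ 1 mod 2 } is generated by the two matrices A = [[1,0],[-2,1]] and B = [[1,1],[0,1]]. -/

import Mathlib

open Matrix

/-- The matrix `A = [[1,0],[-2,1]]` as an element of `SL(2, ℤ)`. -/
def A₂ : Matrix.SpecialLinearGroup (Fin 2) ℤ :=
  ⟨!![1, 0; -2, 1], by norm_num [Matrix.det_fin_two_of]⟩

/-- The matrix `B = [[1,1],[0,1]]` as an element of `SL(2, ℤ)`. -/
def B₂ : Matrix.SpecialLinearGroup (Fin 2) ℤ :=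
  ⟨!![1, 1; 0, 1], by norm_num [Matrix.det_fin_two_of]⟩

lemma B_zpow (n : ℤ) : (B₂ ^ n).1 = !![1, n; 0, 1] :=
  ModularGroup.coe_T_zpow n

lemma A_zpow (n : ℤ) : (A₂ ^ n).1 = !![1, 0; -2 * n, 1] := by
  induction n using Int.induction_on with
  | zero => simp; ext i j; fin_cases i <;> fin_cases j <;> simp
  | succ k ih =>
      rw [_root_.zpow_add_one, Matrix.SpecialLinearGroup.coe_mul, ih]
      ext i j
      fin_cases i <;> fin_cases j <;>
        simp [A₂, Matrix.mul_apply, Fin.sum_univ_two] <;> ring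
  | pred k ih =>
      rw [_root_.zpow_sub_one, Matrix.SpecialLinearGroup.coe_mul, ih]
      have hAinv : (A₂⁻¹).1 = !![1, 0; 2, 1] := by
        rw [Matrix.SpecialLinearGroup.SL2_inv_expl]
        ext i j; fin_cases i <;> fin_cases j <;> simp [A₂]
      rw [hAinv]
      ext i j
      fin_cases i <;> fin_cases j <;>
        simp [Matrix.mul_apply, Fin.sum_univ_two] <;> ring

lemma negI_coe : (((B₂ * A₂) ^ 2).1 : Matrix (Fin 2) (Fin 2) ℤ) = !![-1, 0; 0, -1] := by
  rw [sq, Matrix.SpecialLinearGroup.coe_mul, Matrix.SpecialLinearGroup.coe_mul]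
  simp only [Matrix.SpecialLinearGroup.coe_mul, A₂, B₂]
  ext i j; fin_cases i <;> fin_cases j <;>
    simp [Matrix.mul_apply, Fin.sum_univ_two]

lemma zmod2_one {a : ℤ} (h : (a : ZMod 2) = 1) : a % 2 = 1 := by
  have h2 : ((a - 1 : ℤ) : ZMod 2) = 0 := by push_cast [h]; ring
  rw [ZMod.intCast_zmod_eq_zero_iff_dvd] at h2
  omega

lemma zmod2_zero {a : ℤ} (h : (a : ZMod 2) = 0) : a % 2 = 0 := by
  rw [ZMod.intCast_zmod_eq_zero_iff_dvd] at h
  omega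

lemma A_mem : A₂ ∈ CongruenceSubgroup.Gamma1 2 := by
  rw [CongruenceSubgroup.Gamma1_mem]
  refine ⟨?_, ?_, ?_⟩ <;> simp [A₂] <;> decide

lemma B_mem : B₂ ∈ CongruenceSubgroup.Gamma1 2 := by
  rw [CongruenceSubgroup.Gamma1_mem]
  refine ⟨?_, ?_, ?_⟩ <;> simp [B₂]

lemma entry_helper (k q : ℤ) (Z : Matrix (Fin 2) (Fin 2) ℤ) :
    ((!![1, 0; -2 * k, 1] : Matrix (Fin 2) (Fin 2) ℤ) * (!![1, -q; 0, 1] * Z)) 1 0 =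
      -2 * k * (Z 0 0 - q * Z 1 0) + Z 1 0 := by
  rw [Matrix.mul_apply, Fin.sum_univ_two, Matrix.mul_apply, Fin.sum_univ_two,
    Matrix.mul_apply, Fin.sum_univ_two]
  simp only [Matrix.cons_val_zero, Matrix.cons_val_one, Matrix.head_cons, Matrix.cons_val',
    Matrix.of_apply, Matrix.head_fin_const, Matrix.empty_val', Matrix.cons_val_fin_one]
  ring

lemma key : ∀ (n : ℕ) (M : Matrix.SpecialLinearGroup (Fin 2) ℤ),
    M ∈ CongruenceSubgroup.Gamma1 2 → (M.1 1 0).natAbs ≤ n →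
    M ∈ Subgroup.closure ({A₂, B₂} : Set (Matrix.SpecialLinearGroup (Fin 2) ℤ)) := by
  intro n
  induction n using Nat.strong_induction_on with
  | _ n ih =>
  intro M hM hn
  have hAcl : A₂ ∈ Subgroup.closure ({A₂, B₂} : Set (Matrix.SpecialLinearGroup (Fin 2) ℤ)) :=
    Subgroup.subset_closure (by simp)
  have hBcl : B₂ ∈ Subgroup.closure ({A₂, B₂} : Set (Matrix.SpecialLinearGroup (Fin 2) ℤ)) :=
    Subgroup.subset_closure (by simp)
  obtain ⟨ha, hd, hc⟩ := (CongruenceSubgroup.Gamma1_mem 2 M).1 hM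
  have ha2 : M.1 0 0 % 2 = 1 := zmod2_one ha
  have hc2 : M.1 1 0 % 2 = 0 := zmod2_zero hc
  have hdet : M.1 0 0 * M.1 1 1 - M.1 0 1 * M.1 1 0 = 1 := by
    have h := M.2; rwa [Matrix.det_fin_two] at h
  by_cases hc0 : M.1 1 0 = 0
  · have had : M.1 0 0 * M.1 1 1 = 1 := by rw [hc0] at hdet; linarith
    rcases Int.mul_eq_one_iff_eq_one_or_neg_one.1 had with ⟨h1, h2⟩ | ⟨h1, h2⟩
    · have hMeq : M = B₂ ^ (M.1 0 1) := by
        apply Subtype.ext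
        rw [B_zpow]
        ext i j; fin_cases i <;> fin_cases j <;> simp [h1, h2, hc0]
      rw [hMeq]
      exact zpow_mem hBcl _
    · have hMeq : M = (B₂ * A₂) ^ 2 * B₂ ^ (-(M.1 0 1)) := by
        apply Subtype.ext
        rw [Matrix.SpecialLinearGroup.coe_mul, negI_coe, B_zpow]
        ext i j; fin_cases i <;> fin_cases j <;>
          simp [Matrix.mul_apply, Fin.sum_univ_two, h1, h2, hc0]
      rw [hMeq]
      exact mul_mem (pow_mem (mul_mem hBcl hAcl) 2) (zpow_mem hBcl _)
  · set a := M.1 0 0 with ha_def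
    set c := M.1 1 0 with hc_def
    set q := a / c with hq_def
    set a' := a % c with ha'_def
    have h1 : 0 ≤ a' := Int.emod_nonneg a hc0
    have h2 : a' < (c.natAbs : ℤ) := by
      have := Int.emod_lt a hc0
      exact this
    have hqc : a' = a - c * q := Int.emod_def a c
    have h2c : (2:ℤ) ∣ c := by omega
    have ha'odd : a' % 2 = 1 := by
      have hdq : (2:ℤ) ∣ c * q := h2c.mul_right q
      omega
    have ha'pos : 0 < a' := by omega
    set r0 := c % (2 * a') with hr0_def
    have hr0a : 0 ≤ r0 := Int.emod_nonneg c (by omega)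
    have hr0b : r0 < 2 * a' := Int.emod_lt_of_pos c (by omega)
    have hr0c : r0 = c - 2 * a' * (c / (2 * a')) := Int.emod_def c (2 * a')
    have hr0even : r0 % 2 = 0 := by
      have hdd : (2:ℤ) ∣ 2 * a' * (c / (2 * a')) := ⟨a' * (c / (2 * a')), by ring⟩
      omega
    set r := if r0 ≤ a' then r0 else r0 - 2 * a' with hr_def
    have hrabs : (r.natAbs : ℤ) < a' := by
      rw [hr_def]; split <;> omega
    have hdvd : (2 * a') ∣ (c - r) := by
      rw [hr_def]; split
      · exact ⟨c / (2 * a'), by omega⟩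
      · exact ⟨c / (2 * a') + 1, by rw [mul_add, mul_one]; omega⟩
    set k := (c - r) / (2 * a') with hk_def
    have hkk : 2 * a' * k = c - r := Int.mul_ediv_cancel' hdvd
    set N := A₂ ^ k * (B₂ ^ (-q) * M) with hN_def
    have hNmem : N ∈ CongruenceSubgroup.Gamma1 2 :=
      mul_mem (zpow_mem A_mem k) (mul_mem (zpow_mem B_mem _) hM)
    have hN10 : N.1 1 0 = r := by
      rw [hN_def]
      simp only [Matrix.SpecialLinearGroup.coe_mul, A_zpow, B_zpow]
      rw [entry_helper]
      linear_combination 2 * k * hqc - hkk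
    have hrn : r.natAbs < n := by omega
    have hNcl : N ∈ Subgroup.closure ({A₂, B₂} : Set (Matrix.SpecialLinearGroup (Fin 2) ℤ)) := by
      apply ih r.natAbs hrn N hNmem
      rw [hN10]
    have hMeq : M = B₂ ^ q * (A₂ ^ (-k) * N) := by
      rw [hN_def]; group
    rw [hMeq]
    exact mul_mem (zpow_mem hBcl _) (mul_mem (zpow_mem hAcl _) hNcl)

/-- `Γ₁(2)` is generated by `A = [[1,0],[-2,1]]` and `B = [[1,1],[0,1]]`. -/
theorem gamma1_two_generated :
    Subgroup.closure ({A₂, B₂} : Set (Matrix.SpecialLinearGroup (Fin 2) ℤ)) =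
      CongruenceSubgroup.Gamma1 2 := by
  apply le_antisymm
  · rw [Subgroup.closure_le]
    rintro x (rfl | rfl)
    · exact A_mem
    · exact B_mem
  · intro M hM
    exact key (M.1 1 0).natAbs M hM le_rfl
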